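/- arXiv:1003.5894 — 4 statements merged into one kernel-verified Lean document; each statement's English description precedes it below -/
import Mathlib

section
/- For every field k and every integer n ≥ 2, there exist a field extension K of k and a separable field extension L of K of degree [L:K] = n such that the norm map N_{L/K} : Lˣ → Kˣ is not surjective, i.e. N_{L/K}(Lˣ) ≠ Kˣ. -/
open Polynomial

universe u

section BasisPoly

variable {k0 : Type u} {k1 : Type u} [Field k0] [Field k1] [Algebra k0 k1]

/-- The algebra structure on `k1[X]` over `k0[X]` induced by mapping coefficients. -/
noncomputable def pAlg (k0 k1 : Type u) [Field k0] [Field k1] [Algebra k0 k1] :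
    Algebra (Polynomial k0) (Polynomial k1) :=
  (Polynomial.mapRingHom (algebraMap k0 k1)).toAlgebra

attribute [local instance] pAlg

theorem pAlg_algebraMap_apply (p : Polynomial k0) :
    algebraMap (Polynomial k0) (Polynomial k1) p = p.map (algebraMap k0 k1) := rfl

variable {n : ℕ} (b : Module.Basis (Fin n) k0 k1)

/-- The linear map sending `(p_i)` to `∑ p_i • b i`. -/
noncomputable def psi : (Fin n →₀ Polynomial k0) →ₗ[Polynomial k0] Polynomial k1 :=
  Finsupp.lsum ℕ fun i =>
    (LinearMap.mulRight (Polynomial k0) (Polynomial.C (b i))).comp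
      (Algebra.linearMap (Polynomial k0) (Polynomial k1))

theorem psi_coeff (p : Fin n →₀ Polynomial k0) (d : ℕ) :
    (psi b p).coeff d = ∑ i, ((p i).coeff d) • b i := by
  classical
  rw [psi, Finsupp.lsum_apply]
  rw [Finsupp.sum_fintype]
  · rw [Polynomial.finset_sum_coeff]
    refine Finset.sum_congr rfl fun i _ => ?_
    simp only [LinearMap.comp_apply, Algebra.linearMap_apply, LinearMap.mulRight_apply,
      pAlg_algebraMap_apply, Polynomial.coeff_mul_C, Polynomial.coeff_map,
      Algebra.smul_def]
  · intro i; simp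

theorem psi_bijective : Function.Bijective (psi b) := by
  classical
  constructor
  · rw [injective_iff_map_eq_zero]
    intro p hp
    ext i d
    have h := psi_coeff b p d
    rw [hp] at h
    have := Fintype.linearIndependent_iff.mp b.linearIndependent
      (fun i => (p i).coeff d) h.symm
    simpa using this i
  · intro q
    refine ⟨Finsupp.equivFunOnFinite.symm
      (fun i => ∑ d ∈ q.support, Polynomial.monomial d (b.repr (q.coeff d) i)), ?_⟩
    ext d
    rw [psi_coeff]
    have hcoeff : ∀ i : Fin n,
        ((∑ d' ∈ q.support, Polynomial.monomial d' (b.repr (q.coeff d') i)).coeff d)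
          = b.repr (q.coeff d) i := by
      intro i
      rw [Polynomial.finset_sum_coeff]
      by_cases hd : d ∈ q.support
      · rw [Finset.sum_eq_single d]
        · simp
        · intro d' _ hne; simp [Polynomial.coeff_monomial, hne]
        · intro h; exact absurd hd h
      · have hq : q.coeff d = 0 := by simpa using hd
        rw [hq]
        simp only [map_zero, Finsupp.coe_zero, Pi.zero_apply]
        refine Finset.sum_eq_zero fun d' hd' => ?_
        rw [Polynomial.coeff_monomial, if_neg]
        intro h; exact hd (h ▸ hd')
    simp only [Finsupp.coe_equivFunOnFinite_symm]
    rw [Finset.sum_congr rfl fun i _ => by rw [hcoeff i]]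
    exact b.sum_repr (q.coeff d)

/-- Basis of `k1[X]` over `k0[X]` induced by a basis of `k1` over `k0`. -/
noncomputable def polyBasis : Module.Basis (Fin n) (Polynomial k0) (Polynomial k1) :=
  Module.Basis.ofRepr (LinearEquiv.ofBijective (psi b) (psi_bijective b)).symm

theorem polyBasis_repr_coeff (q : Polynomial k1) (i : Fin n) (d : ℕ) :
    (((polyBasis b).repr q) i).coeff d = b.repr (q.coeff d) i := by
  classical
  have hq : psi b ((polyBasis b).repr q) = q :=
    (LinearEquiv.ofBijective (psi b) (psi_bijective b)).apply_symm_apply q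
  have := psi_coeff b ((polyBasis b).repr q) d
  rw [hq] at this
  rw [this, b.repr_sum_self]





theorem polyBasis_apply (j : Fin n) : polyBasis b j = Polynomial.C (b j) := by
  classical
  rw [polyBasis, Module.Basis.coe_ofRepr]
  simp only [LinearEquiv.symm_symm]
  show psi b (Finsupp.single j 1) = Polynomial.C (b j)
  rw [psi, Finsupp.lsum_single]
  simp [pAlg_algebraMap_apply]

theorem norm_coeff_zero (b : Module.Basis (Fin n) k0 k1) (x : Polynomial k1) :
    (Algebra.norm (Polynomial k0) x).coeff 0 = Algebra.norm k0 (x.coeff 0) := by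
  classical
  rw [Algebra.norm_eq_matrix_det (polyBasis b) x, Algebra.norm_eq_matrix_det b]
  have hmat : (Algebra.leftMulMatrix (polyBasis b) x).map (Polynomial.constantCoeff)
      = Algebra.leftMulMatrix b (x.coeff 0) := by
    ext i j
    simp only [Matrix.map_apply, Algebra.leftMulMatrix_eq_repr_mul]
    show ((((polyBasis b).repr (x * polyBasis b j)) i).coeff 0) = (b.repr (x.coeff 0 * b j)) i
    rw [polyBasis_repr_coeff, polyBasis_apply, Polynomial.coeff_mul_C]
  have hdet := RingHom.map_det (Polynomial.constantCoeff (R := k0))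
    ((Algebra.leftMulMatrix (polyBasis b)) x)
  rw [RingHom.mapMatrix_apply, hmat] at hdet
  exact hdet



end BasisPoly

section GenericLemmas

open Polynomial

/-- Every nonzero polynomial is `X^a * u` with `u.coeff 0 ≠ 0`. -/
theorem exists_X_pow_mul_coeff_zero_ne {A : Type*} [CommRing A] (p : Polynomial A) (hp : p ≠ 0) :
    ∃ (a : ℕ) (u : Polynomial A), u.coeff 0 ≠ 0 ∧ p = X ^ a * u := by
  suffices H : ∀ (m : ℕ) (p : Polynomial A), p ≠ 0 → p.natDegree = m →
      ∃ (a : ℕ) (u : Polynomial A), u.coeff 0 ≠ 0 ∧ p = X ^ a * u from H _ p hp rfl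
  clear hp p
  intro m
  induction m using Nat.strong_induction_on with
  | _ m ih =>
    intro p hp hd
    by_cases h0 : p.coeff 0 = 0
    · have hdecomp : p = X * p.divX := by
        have := Polynomial.X_mul_divX_add p
        rw [h0, map_zero, add_zero] at this
        exact this.symm
      have hdvx : p.divX ≠ 0 := by
        intro h; rw [h, mul_zero] at hdecomp; exact hp hdecomp
      have hdeg : p.divX.natDegree < m := by
        subst hd
        have h1 : p.natDegree ≠ 0 := by
          intro h
          have := Polynomial.eq_C_of_natDegree_eq_zero h
          rw [this, Polynomial.coeff_C] at h0
          simp at h0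
          rw [this, h0, map_zero] at hp
          exact hp rfl
        rw [Polynomial.natDegree_divX_eq_natDegree_tsub_one]
        omega
      obtain ⟨a, u, hu, hux⟩ := ih p.divX.natDegree hdeg p.divX hdvx rfl
      exact ⟨a + 1, u, hu, by rw [hdecomp, hux]; ring⟩
    · exact ⟨0, p, h0, by simp⟩

/-- Clearing denominators into the base ring, for integral extensions of domains. -/
theorem exists_mul_mem_algebraMap_range {R S : Type*} [CommRing R] [CommRing S] [IsDomain S]
    [Nontrivial R] [Algebra R S] (hinj : Function.Injective (algebraMap R S))
    (y : S) (hy : y ≠ 0) (hyint : IsIntegral R y) :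
    ∃ (w : S) (c : R), c ≠ 0 ∧ y * w = algebraMap R S c := by
  obtain ⟨p, pmonic, hp0⟩ := hyint
  have hpne0 : p ≠ 0 := pmonic.ne_zero
  have hp : Polynomial.aeval y p = 0 := hp0
  clear hp0 pmonic
  suffices H : ∀ (m : ℕ) (p : Polynomial R), Polynomial.aeval y p = 0 → p ≠ 0 →
      p.natDegree = m → ∃ (w : S) (c : R), c ≠ 0 ∧ y * w = algebraMap R S c from
    H _ p hp hpne0 rfl
  clear hp hpne0 p
  intro m
  induction m using Nat.strong_induction_on with
  | _ m ih =>
    intro p hp hpne hd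
    by_cases h0 : p.coeff 0 = 0
    · have hdecomp : p = X * p.divX := by
        have := Polynomial.X_mul_divX_add p
        rw [h0, map_zero, add_zero] at this
        exact this.symm
      have hdvx : p.divX ≠ 0 := by
        intro h; rw [h, mul_zero] at hdecomp; exact hpne hdecomp
      have haev : Polynomial.aeval y p.divX = 0 := by
        have : y * Polynomial.aeval y p.divX = 0 := by
          have := hp
          rw [hdecomp] at this
          simpa [mul_comm] using this
        rcases mul_eq_zero.mp this with h | h
        · exact absurd h hy
        · exact h
      have hdeg : p.divX.natDegree < m := by
        subst hd
        have h1 : p.natDegree ≠ 0 := by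
          intro h
          have hC := Polynomial.eq_C_of_natDegree_eq_zero h
          rw [hC, Polynomial.coeff_C] at h0
          simp at h0
          rw [hC, h0, map_zero] at hpne
          exact hpne rfl
        rw [Polynomial.natDegree_divX_eq_natDegree_tsub_one]
        omega
      exact ih p.divX.natDegree hdeg p.divX haev hdvx rfl
    · refine ⟨-(Polynomial.aeval y p.divX), p.coeff 0, h0, ?_⟩
      have := Polynomial.X_mul_divX_add p
      have h2 : Polynomial.aeval y (X * p.divX + C (p.coeff 0)) = 0 := by rw [this]; exact hp
      simp only [map_add, map_mul, Polynomial.aeval_X, Polynomial.aeval_C] at h2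
      have : y * Polynomial.aeval y p.divX = - algebraMap R S (p.coeff 0) := by
        linear_combination h2
      rw [mul_neg, this, neg_neg]

/-- If `X^i * p = X^j * q` with `p q` having nonzero constant coefficients, then `i = j`. -/
theorem X_pow_mul_eq_X_pow_mul {A : Type*} [CommRing A] [IsDomain A] {i j : ℕ}
    {p q : Polynomial A} (hp : p.coeff 0 ≠ 0) (hq : q.coeff 0 ≠ 0)
    (h : X ^ i * p = X ^ j * q) : i = j := by
  have key : ∀ {i j : ℕ} {p q : Polynomial A}, p.coeff 0 ≠ 0 → q.coeff 0 ≠ 0 →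
      X ^ i * p = X ^ j * q → i ≤ j → i = j := by
    intro i j p q hp hq h hij
    obtain ⟨m, rfl⟩ := Nat.exists_eq_add_of_le hij
    rw [pow_add, mul_assoc] at h
    have hcancel : p = X ^ m * q :=
      mul_left_cancel₀ (pow_ne_zero i Polynomial.X_ne_zero) h
    have := congrArg (fun r => Polynomial.coeff r 0) hcancel
    simp only [Polynomial.mul_coeff_zero, Polynomial.coeff_X_pow] at this
    by_cases hm : m = 0
    · omega
    · rw [if_neg (by omega), zero_mul] at this
      exact absurd this hp
  rcases le_total i j with hij | hij
  · exact key hp hq h hij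
  · exact (key hq hp h.symm hij).symm

end GenericLemmas

section Heart

open Polynomial IntermediateField

variable {k0 : Type u} {k1 : Type u} [Field k0] [Field k1] [Algebra k0 k1]

attribute [local instance] pAlg

set_option maxHeartbeats 1000000 in
/-- The heart of the construction: if `k1/k0` has degree `n ≥ 2`, is generated by a
separable element `γ`, then the norm map for `Frac(k1[t]) / Frac(k0[t])` is not surjective. -/
theorem heart {n : ℕ} (hn : 2 ≤ n) (b : Module.Basis (Fin n) k0 k1) (γ : k1)
    (hγ : Algebra.adjoin k0 ({γ} : Set k1) = ⊤) (hsep : (minpoly k0 γ).Separable) :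
    ∃ (L : Type u) (_ : Field L) (_ : Algebra (FractionRing (Polynomial k0)) L),
      Algebra.IsSeparable (FractionRing (Polynomial k0)) L ∧
      Module.finrank (FractionRing (Polynomial k0)) L = n ∧
      ¬ Function.Surjective
        (Units.map (Algebra.norm (FractionRing (Polynomial k0)) : L →* (FractionRing (Polynomial k0)))
          : Lˣ → (FractionRing (Polynomial k0))ˣ) := by
  classical
  set R := Polynomial k0 with hR
  set S := Polynomial k1 with hS
  set K := FractionRing R with hK
  let L := FractionRing S
  have halgRL : algebraMap R L = (algebraMap S L).comp (algebraMap R S) := rfl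
  haveI : IsScalarTower R S L := IsScalarTower.of_algebraMap_eq fun x => rfl
  have hinjRS : Function.Injective (algebraMap R S) := by
    have : algebraMap R S = Polynomial.mapRingHom (algebraMap k0 k1) := rfl
    rw [this]
    exact Polynomial.map_injective _ (algebraMap k0 k1).injective
  have hinjRL : Function.Injective (algebraMap R L) := by
    rw [halgRL]
    exact (IsFractionRing.injective S L).comp hinjRS
  haveI : FaithfulSMul R L := (faithfulSMul_iff_algebraMap_injective R L).mpr hinjRL
  letI : Algebra K L := FractionRing.liftAlgebra R L
  letI : IsScalarTower R K L := IsScalarTower.of_algebraMap_eq fun x =>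
    (IsFractionRing.lift_algebraMap (FaithfulSMul.algebraMap_injective R L) x).symm
  -- module structure
  letI : Module.Free R S := Module.Free.of_basis (polyBasis b)
  letI : Module.Finite R S := Module.Finite.of_basis (polyBasis b)
  letI : Module.Finite k0 k1 := Module.Finite.of_basis b
  -- the localization instance
  haveI hloc : IsLocalization (Algebra.algebraMapSubmonoid S (nonZeroDivisors R)) L := by
    refine (isLocalization_iff (Algebra.algebraMapSubmonoid S (nonZeroDivisors R)) L).mpr ⟨?_, ?_, ?_⟩
    · rintro ⟨y, r, hr, rfl⟩
      have hr0 : r ≠ 0 := nonZeroDivisors.ne_zero hr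
      have : algebraMap S L (algebraMap R S r) ≠ 0 := by
        simp only [ne_eq, map_eq_zero_iff (algebraMap S L) (IsFractionRing.injective S L),
          map_eq_zero_iff (algebraMap R S) hinjRS]
        exact hr0
      exact this.isUnit
    · intro z
      obtain ⟨⟨x, s⟩, hxs⟩ := IsLocalization.surj (nonZeroDivisors S) z
      have hs0 : (s : S) ≠ 0 := nonZeroDivisors.ne_zero s.2
      obtain ⟨w, c, hc, hw⟩ := exists_mul_mem_algebraMap_range hinjRS (s : S) hs0
        (IsIntegral.of_finite R (s : S))
      refine ⟨⟨x * w, ⟨(s : S) * w, c, mem_nonZeroDivisors_of_ne_zero hc, hw.symm⟩⟩, ?_⟩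
      show z * algebraMap S L ((s : S) * w) = algebraMap S L (x * w)
      rw [map_mul, map_mul, ← mul_assoc, hxs]
    · intro x y h
      exact ⟨1, by simpa using (IsFractionRing.injective S L h)⟩
  -- norms
  let BK : Module.Basis (Fin n) K L := (polyBasis b).localizationLocalization K (nonZeroDivisors R) L
  haveI : FiniteDimensional K L := Module.Finite.of_basis BK
  have hrank : Module.finrank K L = n := by
    rw [Module.finrank_eq_card_basis BK, Fintype.card_fin]
  -- separability
  have halgk0L : algebraMap k0 L = (algebraMap K L).comp (algebraMap k0 K) := by
    ext c
    show algebraMap k0 L c = algebraMap K L (algebraMap k0 K c)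
    have h1 : algebraMap k0 K c = algebraMap R K (Polynomial.C c) := rfl
    have h2 : algebraMap k0 L c = algebraMap S L (Polynomial.C (algebraMap k0 k1 c)) := rfl
    rw [h1, h2, ← IsScalarTower.algebraMap_apply R K L, halgRL]
    show algebraMap S L (Polynomial.C (algebraMap k0 k1 c))
      = algebraMap S L (algebraMap R S (Polynomial.C c))
    have h3 : algebraMap R S (Polynomial.C c) = Polynomial.C (algebraMap k0 k1 c) := by
      rw [pAlg_algebraMap_apply, Polynomial.map_C]
    rw [h3]
  haveI : IsScalarTower k0 K L := IsScalarTower.of_algebraMap_eq' halgk0L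
  haveI : IsScalarTower k0 k1 L := IsScalarTower.of_algebraMap_eq' rfl
  set γL : L := algebraMap k1 L γ with hγL
  have hmemT : ∀ s : S, algebraMap S L s ∈ K⟮γL⟯ := by
    intro s
    induction s using Polynomial.induction_on' with
    | add p q hp hq => rw [map_add]; exact add_mem hp hq
    | monomial d c =>
      rw [← Polynomial.C_mul_X_pow_eq_monomial, map_mul, map_pow]
      have hX : algebraMap S L (Polynomial.X) ∈ K⟮γL⟯ := by
        have : (Polynomial.X : S) = algebraMap R S Polynomial.X := by
          rw [pAlg_algebraMap_apply, Polynomial.map_X]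
        rw [this, ← IsScalarTower.algebraMap_apply R S L,
          IsScalarTower.algebraMap_apply R K L]
        exact IntermediateField.algebraMap_mem _ _
      have hc : algebraMap S L (Polynomial.C c) ∈ K⟮γL⟯ := by
        have hcmem : c ∈ Algebra.adjoin k0 ({γ} : Set k1) := hγ ▸ Algebra.mem_top
        rw [Algebra.adjoin_singleton_eq_range_aeval] at hcmem
        obtain ⟨p, hp⟩ := hcmem
        have hp' : Polynomial.aeval γ p = c := hp
        have : algebraMap S L (Polynomial.C c) = algebraMap k1 L c := rfl
        rw [this, ← hp']
        have h2 : algebraMap k1 L (Polynomial.aeval γ p) = Polynomial.aeval γL p := by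
          have h3 := Polynomial.aeval_algHom_apply (IsScalarTower.toAlgHom k0 k1 L) γ p
          simpa [hγL] using h3.symm
        rw [h2, ← Polynomial.aeval_map_algebraMap K γL p]
        have : Polynomial.aeval γL (p.map (algebraMap k0 K)) ∈ Algebra.adjoin K ({γL} : Set L) := by
          rw [Algebra.adjoin_singleton_eq_range_aeval]
          exact ⟨p.map (algebraMap k0 K), rfl⟩
        exact IntermediateField.algebra_adjoin_le_adjoin K _ this
      exact mul_mem hc (pow_mem hX d)
  have htop : K⟮γL⟯ = ⊤ := by
    rw [eq_top_iff]
    intro z _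
    obtain ⟨x, y, hy, rfl⟩ := IsFractionRing.div_surjective (A := S) z
    exact div_mem (hmemT x) (hmemT y)
  have hsepγL : IsSeparable K γL := by
    have hdvd : minpoly K γL ∣ (minpoly k0 γ).map (algebraMap k0 K) := by
      apply minpoly.dvd
      rw [Polynomial.aeval_map_algebraMap]
      have h3 := Polynomial.aeval_algHom_apply (IsScalarTower.toAlgHom k0 k1 L) γ (minpoly k0 γ)
      rw [hγL]
      simp only [IsScalarTower.coe_toAlgHom'] at h3
      rw [h3, minpoly.aeval, map_zero]
    exact (hsep.map).of_dvd hdvd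
  haveI hsepT : Algebra.IsSeparable K (K⟮γL⟯) :=
    (IntermediateField.isSeparable_adjoin_simple_iff_isSeparable K L).mpr hsepγL
  haveI hsepL : Algebra.IsSeparable K L :=
    ⟨fun z => IntermediateField.isSeparable_of_mem_isSeparable K L (htop ▸ mem_top (x := z))⟩
  refine ⟨L, inferInstance, inferInstance, hsepL, hrank, ?_⟩
  -- non-surjectivity
  intro hsurj
  have hXK : algebraMap R K (Polynomial.X : R) ≠ 0 :=
    (map_ne_zero_iff _ (IsFractionRing.injective R K)).mpr Polynomial.X_ne_zero
  obtain ⟨zu, hzu⟩ := hsurj (Units.mk0 _ hXK)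
  have hz : Algebra.norm K (zu : L) = algebraMap R K (Polynomial.X : R) :=
    congrArg Units.val hzu
  obtain ⟨⟨x, s⟩, hxs⟩ := IsLocalization.surj (Algebra.algebraMapSubmonoid S (nonZeroDivisors R)) (zu : L)
  obtain ⟨s0, hs0mem, hs0eq⟩ := s.2
  have hs0 : s0 ≠ 0 := nonZeroDivisors.ne_zero hs0mem
  -- take norms
  have hnorm := congrArg (Algebra.norm K) hxs
  rw [map_mul, hz] at hnorm
  have hnormx : Algebra.norm K (algebraMap S L x) = algebraMap R K (Algebra.norm R x) :=
    Algebra.norm_localization R (nonZeroDivisors R) x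
  have hnorms : Algebra.norm K (algebraMap S L (s : S)) = algebraMap R K (s0 ^ n) := by
    rw [← hs0eq, ← IsScalarTower.algebraMap_apply R S L,
      IsScalarTower.algebraMap_apply R K L, Algebra.norm_algebraMap, hrank, map_pow]
  rw [hnormx, hnorms] at hnorm
  have heq : (Polynomial.X : R) * s0 ^ n = Algebra.norm R x := by
    apply IsFractionRing.injective R K
    rw [map_mul]
    exact hnorm
  -- x is nonzero
  have hxne : x ≠ 0 := by
    intro h
    rw [h, map_zero] at hxs
    have : (zu : L) * algebraMap S L (s : S) ≠ 0 := by
      apply mul_ne_zero (Units.ne_zero zu)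
      rw [← hs0eq]
      simp only [ne_eq, map_eq_zero_iff (algebraMap S L) (IsFractionRing.injective S L),
        map_eq_zero_iff (algebraMap R S) hinjRS]
      exact hs0
    exact this hxs
  -- decompose
  obtain ⟨a, u, hu, hux⟩ := exists_X_pow_mul_coeff_zero_ne x hxne
  obtain ⟨c, w, hw, hwx⟩ := exists_X_pow_mul_coeff_zero_ne s0 hs0
  have hXS : (Polynomial.X : S) = algebraMap R S Polynomial.X := by
    rw [pAlg_algebraMap_apply, Polynomial.map_X]
  have hnormX : Algebra.norm R (Polynomial.X : S) = (Polynomial.X : R) ^ n := by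
    rw [hXS, Algebra.norm_algebraMap_of_basis (polyBasis b), Fintype.card_fin]
  have hnormu : (Algebra.norm R u).coeff 0 ≠ 0 := by
    rw [norm_coeff_zero b u]
    exact (Algebra.norm_ne_zero_iff (R := k0)).mpr hu
  have hfinal : Polynomial.X ^ (1 + c * n) * w ^ n = Polynomial.X ^ (n * a) * Algebra.norm R u := by
    calc Polynomial.X ^ (1 + c * n) * w ^ n
        = Polynomial.X * (Polynomial.X ^ c * w) ^ n := by ring
      _ = Polynomial.X * s0 ^ n := by rw [← hwx]
      _ = Algebra.norm R x := heq
      _ = Algebra.norm R (Polynomial.X ^ a * u) := by rw [← hux]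
      _ = (Algebra.norm R (Polynomial.X : S)) ^ a * Algebra.norm R u := by
          rw [map_mul, map_pow]
      _ = Polynomial.X ^ (n * a) * Algebra.norm R u := by rw [hnormX, ← pow_mul]
  have hwn : (w ^ n).coeff 0 ≠ 0 := by
    have : (w ^ n).coeff 0 = (w.coeff 0) ^ n := by
      rw [← Polynomial.constantCoeff_apply, map_pow, Polynomial.constantCoeff_apply]
    rw [this]
    exact pow_ne_zero n hw
  have hexp : 1 + c * n = n * a := X_pow_mul_eq_X_pow_mul hwn hnormu hfinal
  have hdvd1 : n ∣ 1 := by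
    have h1 : n ∣ n * a := dvd_mul_right n a
    rw [← hexp] at h1
    have h2 : n ∣ c * n := dvd_mul_left n c
    have := (Nat.dvd_sub h1 h2)
    simpa using this
  have := Nat.le_of_dvd one_pos hdvd1
  omega

end Heart

section Final

open Polynomial

/-- Intermediate step: given an irreducible separable monic polynomial of degree `n` over `k0`,
the norm map for the degree-`n` extension of rational function fields is not surjective. -/
theorem of_poly {k0 : Type u} [Field k0] {n : ℕ} (hn : 2 ≤ n) (f : Polynomial k0)
    (hirr : Irreducible f) (hmonic : f.Monic) (hdeg : f.natDegree = n) (hsepf : f.Separable) :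
    ∃ (L : Type u) (_ : Field L) (_ : Algebra (FractionRing (Polynomial k0)) L),
      Algebra.IsSeparable (FractionRing (Polynomial k0)) L ∧
      Module.finrank (FractionRing (Polynomial k0)) L = n ∧
      ¬ Function.Surjective
        (Units.map (Algebra.norm (FractionRing (Polynomial k0)) :
            L →* (FractionRing (Polynomial k0)))
          : Lˣ → (FractionRing (Polynomial k0))ˣ) := by
  haveI := Fact.mk hirr
  have hf0 : f ≠ 0 := hmonic.ne_zero
  let pb := AdjoinRoot.powerBasis hf0
  have hdim : pb.dim = n := hdeg
  let b : Module.Basis (Fin n) k0 (AdjoinRoot f) := pb.basis.reindex (finCongr hdim)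
  have hmin : (minpoly k0 (AdjoinRoot.root f)).Separable := by
    rw [AdjoinRoot.minpoly_root hf0, hmonic.leadingCoeff, inv_one, map_one, mul_one]
    exact hsepf
  exact heart hn b (AdjoinRoot.root f) (AdjoinRoot.adjoinRoot_eq_top) hmin

end Final

section Construction

open Polynomial

variable (k : Type u) [Field k]

theorem exists_good_poly (n : ℕ) (hn : 2 ≤ n) :
    ∃ f : Polynomial (FractionRing (Polynomial k)),
      Irreducible f ∧ f.Monic ∧ f.natDegree = n ∧ f.Separable := by
  classical
  set P0 := Polynomial k with hP0
  set k0 := FractionRing P0 with hk0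
  set a0 : P0 := if (n : k0) = 0 then Polynomial.X else 0 with ha0def
  have ha0 : a0 = Polynomial.X ∨ a0 = 0 := by
    rw [ha0def]; split
    · exact Or.inl rfl
    · exact Or.inr rfl
  set r : Polynomial P0 := Polynomial.C a0 * Polynomial.X - Polynomial.C Polynomial.X with hrdef
  set F0 : Polynomial P0 := Polynomial.X ^ n + r with hF0def
  have hrdeg : r.degree ≤ 1 := by
    rw [hrdef, sub_eq_add_neg, ← map_neg]
    exact Polynomial.degree_linear_le
  have hrltn : r.degree < (n : WithBot ℕ) := lt_of_le_of_lt hrdeg (by exact_mod_cast by omega)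
  have hmonF0 : F0.Monic := Polynomial.monic_X_pow_add hrltn
  have hdegF0 : F0.degree = n := by
    rw [hF0def]
    rw [Polynomial.degree_add_eq_left_of_degree_lt (by rwa [Polynomial.degree_X_pow])]
    exact Polynomial.degree_X_pow n
  have hndF0 : F0.natDegree = n := Polynomial.natDegree_eq_of_degree_eq_some hdegF0
  have hr0 : r.coeff 0 = -Polynomial.X := by
    rw [hrdef]; simp
  have hr1 : r.coeff 1 = a0 := by
    rw [hrdef]; simp
  have hcoeffF0 : ∀ m : ℕ, m < n → F0.coeff m = r.coeff m := by
    intro m hm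
    rw [hF0def, Polynomial.coeff_add, Polynomial.coeff_X_pow, if_neg (by omega), zero_add]
  -- Eisenstein
  have hP : (Ideal.span {(Polynomial.X : P0)}).IsPrime :=
    (Ideal.span_singleton_prime Polynomial.X_ne_zero).mpr Polynomial.prime_X
  have hXnotunit : ¬ ((Polynomial.X : P0) ∣ 1) :=
    fun h => Polynomial.not_isUnit_X (isUnit_of_dvd_one h)
  have hirrF0 : Irreducible F0 := by
    apply Polynomial.irreducible_of_eisenstein_criterion hP
    · rw [hmonF0.leadingCoeff, Ideal.mem_span_singleton]
      exact hXnotunit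
    · intro m hm
      rw [hdegF0] at hm
      have hmn : m < n := by exact_mod_cast hm
      rw [hcoeffF0 m hmn, Ideal.mem_span_singleton]
      match m with
      | 0 => rw [hr0]; exact (dvd_neg).mpr dvd_rfl
      | 1 =>
        rw [hr1]
        rcases ha0 with h | h
        · rw [h]
        · rw [h]; exact dvd_zero _
      | (m + 2) =>
        rw [Polynomial.coeff_eq_zero_of_degree_lt (lt_of_le_of_lt hrdeg (by exact_mod_cast by omega))]
        exact dvd_zero _
    · rw [hdegF0]; exact_mod_cast by omega
    · rw [hcoeffF0 0 (by omega), hr0, Ideal.span_singleton_pow, Ideal.mem_span_singleton, dvd_neg]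
      intro hdvd
      have := Polynomial.degree_le_of_dvd hdvd Polynomial.X_ne_zero
      rw [Polynomial.degree_X_pow, Polynomial.degree_X] at this
      exact absurd this (by decide)
    · exact hmonF0.isPrimitive
  -- map to the fraction field
  set φ := algebraMap P0 k0 with hφ
  set f : Polynomial k0 := F0.map φ with hfdef
  have hinjφ : Function.Injective φ := IsFractionRing.injective P0 k0
  have hirrf : Irreducible f :=
    (hmonF0.isPrimitive.irreducible_iff_irreducible_map_fraction_map).mp hirrF0
  have hmonf : f.Monic := hmonF0.map φ
  have hndf : f.natDegree = n := by rw [hfdef, hmonF0.natDegree_map φ, hndF0]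
  -- separability
  set x' : k0 := φ Polynomial.X with hx'def
  have hx'ne : x' ≠ 0 := (map_ne_zero_iff φ hinjφ).mpr Polynomial.X_ne_zero
  have hfmap : f = Polynomial.X ^ n + (Polynomial.C (φ a0) * Polynomial.X - Polynomial.C x') := by
    rw [hfdef, hF0def, hrdef]
    simp [Polynomial.map_add, Polynomial.map_sub, Polynomial.map_mul, Polynomial.map_pow]
    exact hx'def.symm
  have hder : Polynomial.derivative f
      = Polynomial.C ((n : k0)) * Polynomial.X ^ (n - 1) + Polynomial.C (φ a0) := by
    rw [hfmap]
    simp [Polynomial.derivative_X_pow, Polynomial.C_eq_natCast]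
  have hsepf : f.Separable := by
    rw [Polynomial.separable_def]
    by_cases hcase : (n : k0) = 0
    · have ha0X : a0 = Polynomial.X := by rw [ha0def, if_pos hcase]
      have hderf : Polynomial.derivative f = Polynomial.C x' := by
        rw [hder, hcase, map_zero, zero_mul, zero_add, ha0X, hx'def]
      rw [hderf]
      exact ⟨0, Polynomial.C x'⁻¹, by
        rw [zero_mul, zero_add, ← Polynomial.C_mul, inv_mul_cancel₀ hx'ne, Polynomial.C_1]⟩
    · have ha00 : a0 = 0 := by rw [ha0def, if_neg hcase]
      have hderf : Polynomial.derivative f = Polynomial.C ((n : k0)) * Polynomial.X ^ (n - 1) := by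
        rw [hder, ha00, map_zero, map_zero, add_zero]
      have hf2 : f = Polynomial.X ^ n - Polynomial.C x' := by
        rw [hfmap, ha00, map_zero, map_zero, zero_mul, zero_sub, ← sub_eq_add_neg]
      have hXpow : (Polynomial.X : Polynomial k0) * Polynomial.X ^ (n - 1) = Polynomial.X ^ n := by
        rw [← pow_succ']
        congr 1
        omega
      refine ⟨Polynomial.C (-x'⁻¹), Polynomial.C ((n : k0)⁻¹ * x'⁻¹) * Polynomial.X, ?_⟩
      rw [hderf, hf2]
      have key : Polynomial.C ((n : k0)⁻¹ * x'⁻¹) * Polynomial.X *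
          (Polynomial.C ((n : k0)) * Polynomial.X ^ (n - 1))
          = Polynomial.C x'⁻¹ * Polynomial.X ^ n := by
        have h5 : ((n : k0)⁻¹ * x'⁻¹) * (n : k0) = x'⁻¹ := by
          rw [mul_comm, ← mul_assoc, mul_inv_cancel₀ hcase, one_mul]
        calc Polynomial.C ((n : k0)⁻¹ * x'⁻¹) * Polynomial.X *
            (Polynomial.C ((n : k0)) * Polynomial.X ^ (n - 1))
            = Polynomial.C ((n : k0)⁻¹ * x'⁻¹) * Polynomial.C ((n : k0)) *
              (Polynomial.X * Polynomial.X ^ (n - 1)) := by ring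
          _ = Polynomial.C x'⁻¹ * Polynomial.X ^ n := by
              rw [hXpow, ← Polynomial.C_mul, h5]
      rw [key, map_neg]
      have hfin : -(Polynomial.C x'⁻¹) * (Polynomial.X ^ n - Polynomial.C x') +
          Polynomial.C x'⁻¹ * Polynomial.X ^ n = Polynomial.C x'⁻¹ * Polynomial.C x' := by ring
      rw [hfin, ← Polynomial.C_mul, inv_mul_cancel₀ hx'ne, Polynomial.C_1]
  exact ⟨f, hirrf, hmonf, hndf, hsepf⟩

end Construction

/-- For every field `k` and every integer `n ≥ 2`, there
exist a field extension `K` of `k` and a separable field extension `L` of `K`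
of degree `[L:K] = n` such that the norm map `N_{L/K} : Lˣ → Kˣ` is not
surjective, i.e. `N_{L/K}(Lˣ) ≠ Kˣ`. -/
theorem exists_extension_norm_not_surjective (k : Type u) [Field k] (n : ℕ) (hn : 2 ≤ n) :
    ∃ (K : Type u) (_ : Field K) (_ : Algebra k K) (L : Type u) (_ : Field L) (_ : Algebra K L),
      Algebra.IsSeparable K L ∧ Module.finrank K L = n ∧
      ¬ Function.Surjective (Units.map (Algebra.norm K : L →* K) : Lˣ → Kˣ) := by
  classical
  obtain ⟨f, hirr, hmon, hdeg, hsep⟩ := exists_good_poly k n hn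
  obtain ⟨L, fL, aL, h1, h2, h3⟩ := of_poly hn f hirr hmon hdeg hsep
  refine ⟨FractionRing (Polynomial (FractionRing (Polynomial k))), inferInstance,
    RingHom.toAlgebra ((algebraMap (Polynomial (FractionRing (Polynomial k)))
        (FractionRing (Polynomial (FractionRing (Polynomial k))))).comp
      ((Polynomial.C).comp ((algebraMap (Polynomial k) (FractionRing (Polynomial k))).comp
        (Polynomial.C)))),
    L, fL, aL, h1, h2, h3⟩
end

section
/- Let k be a field and n ≥ 2 an integer. Let L = k(x₁,…,xₙ) be the fraction field of the polynomial ring k[x₁,…,xₙ], let σ be the k-automorphism of L induced by the cyclic permutation of the variables x₁ ↦ x₂ ↦ ⋯ ↦ xₙ ↦ x₁, let Γ = ⟨σ⟩ be the cyclic group of order n it generates, and let K = L^Γ be its fixed field. Then the element s₁ = x₁ + ⋯ + xₙ lies in K, and there is no a ∈ Lˣ with N_{L/K}(a) = s₁; in particular, N_{L/K}(Lˣ) ≠ Kˣ. -/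
open MvPolynomial

lemma aux_hc_td_ne_zero {R σ : Type*} [CommSemiring R] {p : MvPolynomial σ R} (hp : p ≠ 0) :
    homogeneousComponent p.totalDegree p ≠ 0 := by
  obtain ⟨d, hd, hdeg⟩ := Finset.exists_mem_eq_sup p.support
    (support_nonempty.mpr hp) (fun s => s.sum fun _ e => e)
  intro h
  have hc : coeff d (homogeneousComponent p.totalDegree p) = coeff d p := by
    rw [coeff_homogeneousComponent, if_pos]
    rw [totalDegree, hdeg]
    rfl
  rw [h] at hc
  exact (mem_support_iff.mp hd) (by simpa using hc.symm)

lemma aux_td_mul {R σ : Type*} [CommRing R] [IsDomain R] {p q : MvPolynomial σ R}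
    (hp : p ≠ 0) (hq : q ≠ 0) :
    (p * q).totalDegree = p.totalDegree + q.totalDegree := by
  set a := p.totalDegree with ha
  set b := q.totalDegree with hb
  refine le_antisymm (totalDegree_mul p q) ?_
  have key : homogeneousComponent (a + b) (p * q) =
      homogeneousComponent a p * homogeneousComponent b q := by
    conv_lhs => rw [← sum_homogeneousComponent p, ← sum_homogeneousComponent q]
    rw [Finset.sum_mul_sum, map_sum]
    rw [Finset.sum_eq_single a]
    · rw [map_sum, Finset.sum_eq_single b]
      · rw [homogeneousComponent_of_mem
          ((homogeneousComponent_isHomogeneous a p).mul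
            (homogeneousComponent_isHomogeneous b q)), if_pos rfl]
      · intro j hj hjb
        rw [homogeneousComponent_of_mem
          ((homogeneousComponent_isHomogeneous a p).mul
            (homogeneousComponent_isHomogeneous j q)), if_neg (by omega)]
      · intro hb'
        simp [hb] at hb'
    · intro i hi hia
      rw [map_sum, Finset.sum_eq_zero]
      intro j hj
      rw [homogeneousComponent_of_mem
        ((homogeneousComponent_isHomogeneous i p).mul
          (homogeneousComponent_isHomogeneous j q)), if_neg]
      have : i < a + 1 := Finset.mem_range.mp hi
      have : j < b + 1 := Finset.mem_range.mp hj
      omega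
    · intro ha'
      simp [ha] at ha'
  by_contra hlt
  push_neg at hlt
  have h0 : homogeneousComponent (a + b) (p * q) = 0 := homogeneousComponent_eq_zero _ _ hlt
  rw [key] at h0
  exact mul_ne_zero (aux_hc_td_ne_zero hp) (aux_hc_td_ne_zero hq) h0

lemma aux_td_prod {R σ ι : Type*} [CommRing R] [IsDomain R] (s : Finset ι)
    (f : ι → MvPolynomial σ R) (hf : ∀ i ∈ s, f i ≠ 0) :
    (∏ i ∈ s, f i).totalDegree = ∑ i ∈ s, (f i).totalDegree := by
  classical
  induction s using Finset.induction_on with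
  | empty => simp
  | insert x s hx ih =>
    rw [Finset.prod_insert hx, Finset.sum_insert hx,
      aux_td_mul (hf x (Finset.mem_insert_self x s))
        (Finset.prod_ne_zero_iff.mpr fun i hi => hf i (Finset.mem_insert_of_mem hi)),
      ih fun i hi => hf i (Finset.mem_insert_of_mem hi)]

lemma aux_td_rename {R : Type*} [CommSemiring R] {n : ℕ} (e : Equiv.Perm (Fin n))
    (p : MvPolynomial (Fin n) R) :
    (MvPolynomial.rename e p).totalDegree = p.totalDegree := by
  refine le_antisymm (totalDegree_rename_le _ _) ?_
  have : p = rename e.symm (rename e p) := by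
    rw [rename_rename]; simp
  conv_lhs => rw [this]
  exact totalDegree_rename_le _ _

set_option maxHeartbeats 1600000 in
set_option synthInstance.maxHeartbeats 400000 in
/-- Let `k` be a field and `n ≥ 2`.  Let `L = k(x₁,…,xₙ)` be
the fraction field of the polynomial ring `k[x₁,…,xₙ]`, let `σ` be the
`k`-automorphism of `L` induced by the cyclic permutation of the variables
`x₁ ↦ x₂ ↦ ⋯ ↦ xₙ ↦ x₁` (characterized by `σ(xᵢ) = x_{i+1 mod n}`), let
`Γ = ⟨σ⟩` be the cyclic group it generates, and let `K = L^Γ` be its fixed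
field.  Then `s₁ = x₁ + ⋯ + xₙ` lies in `K`, there is no `a ∈ Lˣ` with
`N_{L/K}(a) = s₁`, and in particular `N_{L/K}(Lˣ) ≠ Kˣ`, i.e. the norm map
`Lˣ → Kˣ` is not surjective. -/
theorem cyclic_fixed_field_norm_not_surjective (k : Type*) [Field k] (n : ℕ) (hn : 2 ≤ n)
    (σ : FractionRing (MvPolynomial (Fin n) k) ≃ₐ[k] FractionRing (MvPolynomial (Fin n) k))
    (hσ : ∀ i : Fin n,
      σ (algebraMap (MvPolynomial (Fin n) k) (FractionRing (MvPolynomial (Fin n) k))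
          (MvPolynomial.X i)) =
        algebraMap (MvPolynomial (Fin n) k) (FractionRing (MvPolynomial (Fin n) k))
          (MvPolynomial.X (finRotate n i))) :
    let L := FractionRing (MvPolynomial (Fin n) k)
    let Γ : Subgroup (L ≃ₐ[k] L) := Subgroup.zpowers σ
    let K : IntermediateField k L := IntermediateField.fixedField Γ
    let s₁ : L := algebraMap (MvPolynomial (Fin n) k) L (∑ i : Fin n, MvPolynomial.X i)
    s₁ ∈ K ∧
    (¬ ∃ a : Lˣ, ((Algebra.norm K ((a : L)) : K) : L) = s₁) ∧
    ¬ Function.Surjective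
        (Units.map (Algebra.norm K : L →* K) : Lˣ → (↥K)ˣ) := by
  intro L Γ K s₁
  obtain ⟨n', rfl⟩ : ∃ n', n = n' + 2 := ⟨n - 2, by omega⟩
  set A := MvPolynomial (Fin (n' + 2)) k with hA
  set ρ : Equiv.Perm (Fin (n' + 2)) := finRotate (n' + 2) with hρ
  -- σ acts on polynomials by renaming
  have hren : ∀ p : A, σ (algebraMap A L p) = algebraMap A L (rename ρ p) := by
    have h : (σ.toAlgHom.comp (IsScalarTower.toAlgHom k A L)) =
        ((IsScalarTower.toAlgHom k A L).comp (rename (ρ : Fin (n' + 2) → Fin (n' + 2)))) := by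
      apply MvPolynomial.algHom_ext
      intro i
      show σ (algebraMap A L (X i)) = algebraMap A L (rename (⇑ρ) (X i))
      rw [rename_X]
      exact hσ i
    intro p
    exact DFunLike.congr_fun h p
  -- property of being induced by a renaming
  set P : (L ≃ₐ[k] L) → Prop :=
    fun g => ∃ e : Equiv.Perm (Fin (n' + 2)),
      ∀ p : A, g (algebraMap A L p) = algebraMap A L (rename e p) with hP
  have hPσ : P σ := ⟨ρ, hren⟩
  have hPmul : ∀ g₁ g₂, P g₁ → P g₂ → P (g₁ * g₂) := by
    rintro g₁ g₂ ⟨e₁, h₁⟩ ⟨e₂, h₂⟩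
    refine ⟨e₁ * e₂, fun p => ?_⟩
    show g₁ (g₂ (algebraMap A L p)) = _
    rw [h₂, h₁, rename_rename]
    rfl
  have hPinv : ∀ g, P g → P g⁻¹ := by
    rintro g ⟨e, h⟩
    refine ⟨e⁻¹, fun p => ?_⟩
    have hcomp : (⇑e ∘ ⇑e⁻¹) = id := by ext x; simp
    have : algebraMap A L p = g (algebraMap A L (rename (e⁻¹ : Equiv.Perm _) p)) := by
      rw [h, rename_rename, hcomp, rename_id, AlgHom.id_apply]
    rw [this]
    exact (g.symm_apply_apply _)
  have hP1 : P 1 := by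
    refine ⟨1, fun p => ?_⟩
    simp [Equiv.Perm.coe_one, rename_id]
  have hPz : ∀ m : ℤ, P (σ ^ m) := by
    intro m
    induction m using Int.induction_on with
    | zero => rw [zpow_zero]; exact hP1
    | succ i ih => rw [zpow_add_one]; exact hPmul _ _ ih hPσ
    | pred i ih => rw [zpow_sub_one]; exact hPmul _ _ ih (hPinv _ hPσ)
  have hPΓ : ∀ γ : Γ, P (γ : L ≃ₐ[k] L) := by
    rintro ⟨g, hg⟩
    obtain ⟨m, rfl⟩ := Subgroup.mem_zpowers_iff.mp hg
    exact hPz m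
  -- σ^m on polynomials for natural m
  have hQ : ∀ (m : ℕ) (p : A), (σ ^ m) (algebraMap A L p) =
      algebraMap A L (rename (⇑(ρ ^ m)) p) := by
    intro m
    induction m with
    | zero => intro p; simp [Equiv.Perm.coe_one, rename_id]
    | succ m ih =>
      intro p
      rw [pow_succ]
      show (σ ^ m) (σ (algebraMap A L p)) = _
      rw [hren, ih, rename_rename, pow_succ]
      rfl
  -- σ has finite order
  obtain ⟨N₀, hN₀pos, hρN₀⟩ : ∃ N₀, 0 < N₀ ∧ ρ ^ N₀ = 1 :=
    ⟨orderOf ρ, orderOf_pos ρ, pow_orderOf_eq_one ρ⟩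
  have hσN : σ ^ N₀ = 1 := by
    refine AlgEquiv.ext fun x => ?_
    obtain ⟨p, q, hq, rfl⟩ := IsFractionRing.div_surjective (A := A) x
    rw [map_div₀, hQ, hQ, hρN₀]
    simp [Equiv.Perm.coe_one, rename_id]
    rfl
  have hfinσ : IsOfFinOrder σ :=
    isOfFinOrder_iff_pow_eq_one.mpr ⟨N₀, hN₀pos, hσN⟩
  haveI hΓfin : Finite Γ := hfinσ.finite_zpowers
  -- Galois machinery via FixedPoints
  haveI : FiniteDimensional K L := by
    have h := (inferInstance : FiniteDimensional (FixedPoints.subfield Γ L) L); exact h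
  haveI : IsGalois K L := by
    have h1 := (inferInstance : Normal (FixedPoints.subfield Γ L) L)
    have h2 := (inferInstance : Algebra.IsSeparable (FixedPoints.subfield Γ L) L)
    exact { to_isSeparable := h2, to_normal := h1 }
  have hsurj : ∀ g : L ≃ₐ[K] L, ∃ γ : Γ, ∀ x : L, g x = (γ : L ≃ₐ[k] L) x := by
    intro g
    obtain ⟨γ, hγ⟩ := FixedPoints.toAlgAut_surjective Γ L (by exact g)
    exact ⟨γ, fun x => by rw [← hγ]; rfl⟩
  -- every K-automorphism is a renaming
  have hE : ∀ g : L ≃ₐ[K] L, ∃ e : Equiv.Perm (Fin (n' + 2)),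
      ∀ p : A, g (algebraMap A L p) = algebraMap A L (rename e p) := by
    intro g
    obtain ⟨γ, hγ⟩ := hsurj g
    obtain ⟨e, he⟩ := hPΓ γ
    exact ⟨e, fun p => by rw [hγ, he]⟩
  -- the polynomial S
  set S : A := ∑ i : Fin (n' + 2), X i with hS
  have hS0 : S ≠ 0 := by
    intro h
    have := congrArg (eval (Pi.single (0 : Fin (n' + 2)) (1 : k))) h
    simp [hS, eval_X, Finset.sum_pi_single'] at this
  have hShom : S.IsHomogeneous 1 :=
    IsHomogeneous.sum _ _ _ fun i _ => isHomogeneous_X _ _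
  have hStd : S.totalDegree = 1 := hShom.totalDegree hS0
  have hs₁S : s₁ = algebraMap A L S := rfl
  have hs₁ne : s₁ ≠ 0 := by
    rw [hs₁S]
    intro h
    exact hS0 (IsFractionRing.injective A L (by rwa [map_zero]))
  -- Part 1 : s₁ ∈ K
  have hσs : σ s₁ = s₁ := by
    rw [hs₁S, hren]
    congr 1
    rw [hS, map_sum]
    simp only [rename_X]
    exact Equiv.sum_comp ρ X
  have h1 : s₁ ∈ K := by
    have hle : Γ ≤ MulAction.stabilizer (L ≃ₐ[k] L) s₁ :=
      Subgroup.zpowers_le.mpr hσs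
    exact fun γ => hle γ.2
  -- Part 2
  have h2 : ¬ ∃ a : Lˣ, ((Algebra.norm K ((a : L)) : K) : L) = s₁ := by
    rintro ⟨a, ha⟩
    have hnorm : ((Algebra.norm K ((a : L)) : K) : L) = ∏ g : L ≃ₐ[K] L, g (a : L) := by
      rw [← Algebra.norm_eq_prod_automorphisms]
      rfl
    rw [hnorm] at ha
    choose e he using hE
    obtain ⟨p, q, hqmem, hpq⟩ := IsFractionRing.div_surjective (A := A) (a : L)
    have hq0 : q ≠ 0 := nonZeroDivisors.ne_zero hqmem
    have hp0 : p ≠ 0 := by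
      intro h
      apply Units.ne_zero a
      rw [← hpq, h, map_zero, zero_div]
    have hg : ∀ g : L ≃ₐ[K] L, g (a : L) =
        algebraMap A L (rename (e g) p) / algebraMap A L (rename (e g) q) := by
      intro g
      rw [← hpq, map_div₀, he, he]
    set Pp : A := ∏ g : L ≃ₐ[K] L, rename (e g) p with hPp
    set Qq : A := ∏ g : L ≃ₐ[K] L, rename (e g) q with hQq
    have hprod : (algebraMap A L Pp) / (algebraMap A L Qq) = algebraMap A L S := by
      rw [← hs₁S, ← ha]
      rw [hPp, hQq, map_prod, map_prod, ← Finset.prod_div_distrib]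
      exact (Finset.prod_congr rfl fun g _ => (hg g).symm)
    have hrene : ∀ (g : L ≃ₐ[K] L) (r : A), r ≠ 0 → rename (⇑(e g)) r ≠ 0 := by
      intro g r hr h
      exact hr (rename_injective _ (e g).injective (by simpa using h))
    have hQq0 : Qq ≠ 0 :=
      Finset.prod_ne_zero_iff.mpr fun g _ => hrene g q hq0
    have hPp0 : Pp ≠ 0 :=
      Finset.prod_ne_zero_iff.mpr fun g _ => hrene g p hp0
    have hQqL : algebraMap A L Qq ≠ 0 := fun h =>
      hQq0 (IsFractionRing.injective A L (by rwa [map_zero]))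
    have hPQ : Pp = S * Qq := by
      apply IsFractionRing.injective A L
      rw [map_mul]
      rw [div_eq_iff hQqL] at hprod
      exact hprod
    -- degrees
    set N : ℕ := Fintype.card (L ≃ₐ[K] L) with hN
    have htdP : Pp.totalDegree = N * p.totalDegree := by
      rw [hPp, aux_td_prod _ _ fun g _ => hrene g p hp0]
      rw [Finset.sum_congr rfl fun g _ => aux_td_rename (e g) p]
      rw [Finset.sum_const, Finset.card_univ, smul_eq_mul]
    have htdQ : Qq.totalDegree = N * q.totalDegree := by
      rw [hQq, aux_td_prod _ _ fun g _ => hrene g q hq0]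
      rw [Finset.sum_congr rfl fun g _ => aux_td_rename (e g) q]
      rw [Finset.sum_const, Finset.card_univ, smul_eq_mul]
    have hdeg : N * p.totalDegree = 1 + N * q.totalDegree := by
      rw [← htdP, ← htdQ, ← hStd, hPQ, aux_td_mul hS0 hQq0]
    -- N ≥ 2
    have hg0 : ∃ g : L ≃ₐ[K] L, g ≠ 1 := by
      refine ⟨(show L ≃ₐ[K] L from MulSemiringAction.toAlgAut Γ (FixedPoints.subfield Γ L) L
        ⟨σ, Subgroup.mem_zpowers σ⟩), fun h => ?_⟩
      have hx := DFunLike.congr_fun h (algebraMap A L (X 0))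
      have hx' : σ (algebraMap A L (X 0)) = algebraMap A L (X 0) := hx
      rw [hσ 0] at hx'
      have := IsFractionRing.injective A L hx'
      have h01 := X_injective this
      have : finRotate (n' + 2) 0 = 0 := h01
      rw [finRotate_succ_apply, zero_add] at this
      exact one_ne_zero this
    haveI : Nontrivial (L ≃ₐ[K] L) := ⟨hg0.choose, 1, hg0.choose_spec⟩
    have hN2 : 2 ≤ N := Fintype.one_lt_card_iff_nontrivial.mpr ‹_›
    -- arithmetic contradiction
    have hsub : N * p.totalDegree - N * q.totalDegree = 1 :=
      Nat.sub_eq_of_eq_add hdeg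
    have hdvd : N ∣ 1 := hsub ▸ Nat.dvd_sub (dvd_mul_right N _) (dvd_mul_right N _)
    have : N = 1 := Nat.dvd_one.mp hdvd
    omega
  refine ⟨h1, h2, ?_⟩
  intro hsurjU
  have hKne : (⟨s₁, h1⟩ : K) ≠ 0 := fun h => hs₁ne (congrArg Subtype.val h)
  obtain ⟨a, ha⟩ := hsurjU (Units.mk0 ⟨s₁, h1⟩ hKne)
  apply h2
  refine ⟨a, ?_⟩
  have := congrArg Units.val ha
  rw [Units.coe_map] at this
  rw [show ((Algebra.norm K : L →* K) (a : L)) = Algebra.norm K ((a : L)) from rfl] at this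
  rw [this]
  rfl
end

section
/- Let k be a field, r ≥ 1, and n₁,…,n_r positive integers with N = n₁ + ⋯ + n_r. Let L = k(x₁,…,x_N), let G = S_{n₁} × ⋯ × S_{n_r} act on L by k-automorphisms, where S_{n₁} permutes the first n₁ variables, S_{n₂} the next n₂ variables, and so on, and let K = L^G be the fixed field. For each i set m_i = n₁ + ⋯ + n_{i-1} + 1 and L_i = K(x_{m_i}) ⊆ L. Then L_i is a finite separable field extension of K with [L_i : K] = n_i. -/
/-- The starting index (0-based) of the `i`-th block of consecutive variables,
for blocks of sizes `n 0, n 1, …` (so block `i` starts at `n 0 + ⋯ + n (i-1)`). -/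
def blockStart {r : ℕ} (n : Fin r → ℕ) (i : Fin r) : ℕ := ∑ j ∈ Finset.Iio i, n j

/-- The embedding of `S_{n 0} × ⋯ × S_{n (r-1)}` into the symmetric group of
`Fin N`, via a block decomposition `e : (Σ i, Fin (n i)) ≃ Fin N`: the `i`-th
factor permutes the `i`-th block of variables. -/
def blockPermHom {r : ℕ} (n : Fin r → ℕ) (N : ℕ) (e : ((i : Fin r) × Fin (n i)) ≃ Fin N) :
    ((i : Fin r) → Equiv.Perm (Fin (n i))) →* Equiv.Perm (Fin N) where
  toFun g := (e.symm.trans (Equiv.sigmaCongrRight g)).trans e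
  map_one' := by
    ext j
    simp
  map_mul' g h := by
    ext j
    rcases hj : e.symm j with ⟨i, x⟩
    simp [Equiv.Perm.mul_apply, hj]

set_option linter.unusedVariables false

theorem blockPermHom_apply_block {r : ℕ} (n : Fin r → ℕ) (N : ℕ)
    (e : ((i : Fin r) × Fin (n i)) ≃ Fin N)
    (g : ∀ i, Equiv.Perm (Fin (n i))) (i : Fin r) (j : Fin (n i)) :
    blockPermHom n N e g (e ⟨i, j⟩) = e ⟨i, g i j⟩ := by
  simp [blockPermHom]

open Polynomial in
theorem aux_fixed (k L : Type*) [Field k] [Field L] [Algebra k L]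
    (G : Subgroup (L ≃ₐ[k] L))
    (K : IntermediateField k L) (hK : K = IntermediateField.fixedField G)
    (m : ℕ) (hm : 0 < m) (y : Fin m → L) (hyinj : Function.Injective y)
    (x : L) (hx : x = y ⟨0, hm⟩)
    (hcoef : ∀ t : ℕ, (∏ j : Fin m, (Polynomial.X - Polynomial.C (y j))).coeff t ∈ K)
    (horb : ∀ j : Fin m, ∃ σ : L ≃ₐ[k] L, σ ∈ G ∧ σ x = y j) :
    FiniteDimensional K (IntermediateField.adjoin K {x}) ∧
    Algebra.IsSeparable K (IntermediateField.adjoin K {x}) ∧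
    Module.finrank K (IntermediateField.adjoin K {x}) = m := by
  classical
  set PL : Polynomial L := ∏ j : Fin m, (Polynomial.X - Polynomial.C (y j)) with hPL
  have hPLmonic : PL.Monic := monic_prod_of_monic _ _ fun j _ => monic_X_sub_C _
  have hPLdeg : PL.natDegree = m := by
    rw [hPL, natDegree_prod_of_monic _ _ fun j _ => monic_X_sub_C _]
    simp
  have hlifts : PL ∈ Polynomial.lifts (algebraMap (↥K) L) :=
    (Polynomial.lifts_iff_coeff_lifts PL).mpr fun t => ⟨⟨PL.coeff t, hcoef t⟩, rfl⟩
  obtain ⟨P0, hmap, hdeg, hP0monic⟩ :=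
    Polynomial.lifts_and_degree_eq_and_monic hlifts hPLmonic
  have hP0deg : P0.natDegree = m := by
    rw [← hPLdeg]
    exact Polynomial.natDegree_eq_of_degree_eq hdeg
  have haev : Polynomial.aeval x P0 = 0 := by
    rw [Polynomial.aeval_def, Polynomial.eval₂_eq_eval_map, hmap, hPL, Polynomial.eval_prod]
    refine Finset.prod_eq_zero (Finset.mem_univ (⟨0, hm⟩ : Fin m)) ?_
    simp [hx]
  have hxint : IsIntegral (↥K) x := ⟨P0, hP0monic, by rwa [Polynomial.aeval_def] at haev⟩
  have hdvd : minpoly (↥K) x ∣ P0 := minpoly.dvd _ x haev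
  have hPLsep : PL.Separable := Polynomial.separable_prod_X_sub_C_iff.2 hyinj
  have hmapdvd : (minpoly (↥K) x).map (algebraMap (↥K) L) ∣ PL := by
    rw [← hmap]; exact Polynomial.map_dvd _ hdvd
  have hsep : IsSeparable (↥K) x :=
    (Polynomial.separable_map (algebraMap (↥K) L)).mp (hPLsep.of_dvd hmapdvd)
  have hfin : FiniteDimensional K (IntermediateField.adjoin K {x}) :=
    IntermediateField.adjoin.finiteDimensional hxint
  have hsepext : Algebra.IsSeparable K (IntermediateField.adjoin K {x}) :=
    (IntermediateField.isSeparable_adjoin_simple_iff_isSeparable _ _).2 hsep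
  refine ⟨hfin, hsepext, ?_⟩
  rw [IntermediateField.adjoin.finrank hxint]
  have hle : (minpoly (↥K) x).natDegree ≤ m := by
    rw [← hP0deg]
    exact Polynomial.natDegree_le_of_dvd hdvd hP0monic.ne_zero
  have hroot : ∀ j : Fin m, Polynomial.aeval (y j) (minpoly (↥K) x) = 0 := by
    intro j
    obtain ⟨σ, hσG, hσx⟩ := horb j
    have hfix : ∀ c : L, c ∈ K → σ c = c := by
      intro c hc
      rw [hK] at hc
      exact hc ⟨σ, hσG⟩
    let σ' : L →ₐ[K] L := { σ.toRingEquiv.toRingHom with commutes' := fun c => hfix c c.2 }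
    have : Polynomial.aeval (σ' x) (minpoly (↥K) x) = 0 := by
      rw [Polynomial.aeval_algHom_apply, minpoly.aeval, map_zero]
    have hσ'x : σ' x = y j := hσx
    rwa [hσ'x] at this
  set q : Polynomial L := (minpoly (↥K) x).map (algebraMap (↥K) L) with hq
  have hq0 : q ≠ 0 := by
    rw [hq]
    exact Polynomial.map_ne_zero (minpoly.ne_zero hxint)
  have hmemroots : ∀ j : Fin m, y j ∈ q.roots := by
    intro j
    rw [Polynomial.mem_roots hq0]
    show q.IsRoot (y j)
    rw [hq, Polynomial.IsRoot, Polynomial.eval_map, ← Polynomial.aeval_def]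
    exact hroot j
  have hge : m ≤ (minpoly (↥K) x).natDegree := by
    have h1 : (Finset.univ.image y) ⊆ q.roots.toFinset := by
      intro c hc
      obtain ⟨j, _, rfl⟩ := Finset.mem_image.mp hc
      exact Multiset.mem_toFinset.mpr (hmemroots j)
    calc m = (Finset.univ.image y).card := by
              rw [Finset.card_image_of_injective _ hyinj, Finset.card_univ, Fintype.card_fin]
      _ ≤ q.roots.toFinset.card := Finset.card_le_card h1
      _ ≤ Multiset.card q.roots := Multiset.toFinset_card_le _
      _ ≤ q.natDegree := Polynomial.card_roots' q
      _ = (minpoly (↥K) x).natDegree := by rw [hq, Polynomial.natDegree_map]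
  omega

/-- Let `k` be a field, `r ≥ 1`, and `n₁,…,n_r` positive
integers with `N = n₁ + ⋯ + n_r`.  Let `L = k(x₁,…,x_N)` (the fraction field
of `MvPolynomial (Fin N) k`), let `G = S_{n₁} × ⋯ × S_{n_r}` act on `L` by
`k`-automorphisms, where `S_{n₁}` permutes the first `n₁` variables, `S_{n₂}`
the next `n₂`, and so on (the action on `L` being induced by permuting the
variables, via the homomorphism `ρ` characterized by `ρ π (x_j) = x_{π j}`),
and let `K = L^G` be the fixed field.  For each `i` let `L_i = K(x_{m_i})`
where `m_i = n₁ + ⋯ + n_{i-1} + 1` (i.e. `x_{m_i}` is the first variable of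
the `i`-th block).  Then `L_i` is a finite separable field extension of `K`
with `[L_i : K] = n_i`. -/
theorem block_fixed_field_adjoin_first_variable (k : Type*) [Field k]
    (r : ℕ) (hr : 1 ≤ r) (n : Fin r → ℕ) (hn : ∀ i, 1 ≤ n i)
    (N : ℕ) (hN : N = ∑ i, n i)
    (e : ((i : Fin r) × Fin (n i)) ≃ Fin N)
    (he : ∀ (i : Fin r) (j : Fin (n i)), ((e ⟨i, j⟩ : Fin N) : ℕ) = blockStart n i + (j : ℕ))
    (ρ : Equiv.Perm (Fin N) →*
      (FractionRing (MvPolynomial (Fin N) k) ≃ₐ[k] FractionRing (MvPolynomial (Fin N) k)))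
    (hρ : ∀ (π : Equiv.Perm (Fin N)) (j : Fin N),
      ρ π (algebraMap (MvPolynomial (Fin N) k) (FractionRing (MvPolynomial (Fin N) k))
          (MvPolynomial.X j)) =
        algebraMap (MvPolynomial (Fin N) k) (FractionRing (MvPolynomial (Fin N) k))
          (MvPolynomial.X (π j))) :
    let L := FractionRing (MvPolynomial (Fin N) k)
    let G : Subgroup (L ≃ₐ[k] L) := (ρ.comp (blockPermHom n N e)).range
    let K : IntermediateField k L := IntermediateField.fixedField G
    ∀ i : Fin r,
      let Li : IntermediateField K L := IntermediateField.adjoin K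
        {algebraMap (MvPolynomial (Fin N) k) L (MvPolynomial.X (e ⟨i, ⟨0, hn i⟩⟩))}
      FiniteDimensional K Li ∧ Algebra.IsSeparable K Li ∧ Module.finrank K Li = n i := by
  intro L G K i Li
  classical
  set φ : MvPolynomial (Fin N) k →+* L := algebraMap (MvPolynomial (Fin N) k) L with hφ
  have hφinj : Function.Injective φ := IsFractionRing.injective (MvPolynomial (Fin N) k) L
  set y : Fin (n i) → L := fun j => φ (MvPolynomial.X (e ⟨i, j⟩)) with hy
  have hyinj : Function.Injective y := by
    intro a b hab
    have h1 := MvPolynomial.X_injective (hφinj hab)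
    have h2 := e.injective h1
    exact eq_of_heq (Sigma.mk.inj_iff.mp h2).2
  -- ρ commutes with rename
  have hcomm : ∀ (π : Equiv.Perm (Fin N)) (p : MvPolynomial (Fin N) k),
      ρ π (φ p) = φ (MvPolynomial.rename π p) := by
    intro π p
    have h : ((ρ π).toAlgHom.comp (IsScalarTower.toAlgHom k (MvPolynomial (Fin N) k) L)) =
        ((IsScalarTower.toAlgHom k (MvPolynomial (Fin N) k) L).comp
          (MvPolynomial.rename (⇑π) : MvPolynomial (Fin N) k →ₐ[k] MvPolynomial (Fin N) k)) := by
      apply MvPolynomial.algHom_ext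
      intro j
      simp only [AlgHom.coe_comp, Function.comp_apply, IsScalarTower.coe_toAlgHom',
        AlgEquiv.toAlgHom_eq_coe, AlgHom.coe_coe, MvPolynomial.rename_X]
      exact hρ π j
    exact DFunLike.congr_fun h p
  set Pm : Polynomial (MvPolynomial (Fin N) k) :=
    ∏ j : Fin (n i), (Polynomial.X - Polynomial.C (MvPolynomial.X (e ⟨i, j⟩))) with hPm
  have hPLprod : Pm.map φ = ∏ j : Fin (n i), (Polynomial.X - Polynomial.C (y j)) := by
    rw [hPm, Polynomial.map_prod]
    refine Finset.prod_congr rfl fun j _ => ?_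
    simp [hy]
  -- Pm fixed under renames by block perms
  have hPmfix : ∀ g : ∀ i', Equiv.Perm (Fin (n i')),
      Polynomial.map (MvPolynomial.rename (⇑(blockPermHom n N e g)) :
        MvPolynomial (Fin N) k →ₐ[k] MvPolynomial (Fin N) k).toRingHom Pm = Pm := by
    intro g
    rw [hPm, Polynomial.map_prod]
    have h1 : ∀ j : Fin (n i),
        Polynomial.map (MvPolynomial.rename (⇑(blockPermHom n N e g)) :
          MvPolynomial (Fin N) k →ₐ[k] MvPolynomial (Fin N) k).toRingHom
          (Polynomial.X - Polynomial.C (MvPolynomial.X (e ⟨i, j⟩)))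
        = (Polynomial.X - Polynomial.C (MvPolynomial.X (e ⟨i, (g i) j⟩))) := by
      intro j
      rw [Polynomial.map_sub, Polynomial.map_X, Polynomial.map_C]
      simp [blockPermHom_apply_block]
    rw [Finset.prod_congr rfl fun j _ => h1 j]
    exact Fintype.prod_equiv (g i) _ _ fun j => rfl
  -- coefficients lie in K
  have hcoef : ∀ t : ℕ,
      (∏ j : Fin (n i), (Polynomial.X - Polynomial.C (y j))).coeff t ∈ K := by
    intro t
    have hcoe : (∏ j : Fin (n i), (Polynomial.X - Polynomial.C (y j))).coeff t
        = φ (Pm.coeff t) := by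
      rw [← hPLprod, Polynomial.coeff_map]
    rw [hcoe]
    intro σ
    obtain ⟨g, hg⟩ := σ.2
    show σ.1 (φ (Pm.coeff t)) = φ (Pm.coeff t)
    rw [← hg]
    show ρ (blockPermHom n N e g) (φ (Pm.coeff t)) = φ (Pm.coeff t)
    rw [hcomm]
    congr 1
    have h2 := congrArg (fun q => Polynomial.coeff q t) (hPmfix g)
    simpa [Polynomial.coeff_map] using h2
  -- orbit
  have horb : ∀ j : Fin (n i), ∃ σ : L ≃ₐ[k] L, σ ∈ G ∧
      σ (φ (MvPolynomial.X (e ⟨i, ⟨0, hn i⟩⟩))) = y j := by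
    intro j
    refine ⟨ρ (blockPermHom n N e (Pi.mulSingle i (Equiv.swap ⟨0, hn i⟩ j))),
      ⟨Pi.mulSingle i (Equiv.swap ⟨0, hn i⟩ j), rfl⟩, ?_⟩
    rw [show (φ (MvPolynomial.X (e ⟨i, ⟨0, hn i⟩⟩)) : L)
        = algebraMap (MvPolynomial (Fin N) k) L (MvPolynomial.X (e ⟨i, ⟨0, hn i⟩⟩)) from rfl,
      hρ, blockPermHom_apply_block]
    simp [hy]
  exact aux_fixed k L G K rfl (n i) (hn i) y hyinj _ rfl hcoef horb
end

section
/- Let k be a field, r ≥ 1, and n₁,…,n_r positive integers with N = n₁ + ⋯ + n_r. Let L = k(x₁,…,x_N), let G = S_{n₁} × ⋯ × S_{n_r} act on L by permuting the variables in consecutive blocks of sizes n₁,…,n_r, and let K = L^G. For each i set m_i = n₁ + ⋯ + n_{i-1} + 1 and L_i = K(x_{m_i}) ⊆ L. Let deg : Lˣ → ℤ be any degree homomorphism on L. Then for every i and every a ∈ L_iˣ, the integer deg(N_{L_i/K}(a)) is divisible by n_i (where N_{L_i/K}(a) ∈ Kˣ is viewed as an element of Lˣ). -/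
set_option maxHeartbeats 2000000
set_option synthInstance.maxHeartbeats 1000000
set_option linter.unusedVariables false


/-- A *degree homomorphism* on the rational function field `k(x₁,…,x_N)`
(realized as the fraction field of `MvPolynomial (Fin N) k`): a group
homomorphism `deg : k(x₁,…,x_N)ˣ → ℤ` with `deg p` equal to the total degree
of `p` for every nonzero polynomial `p`. -/
def IsDegreeHom (k : Type*) [Field k] (N : ℕ)
    (d : (FractionRing (MvPolynomial (Fin N) k))ˣ → ℤ) : Prop :=
  (∀ a b : (FractionRing (MvPolynomial (Fin N) k))ˣ, d (a * b) = d a + d b) ∧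
  ∀ (u : (FractionRing (MvPolynomial (Fin N) k))ˣ) (p : MvPolynomial (Fin N) k), p ≠ 0 →
    (u : FractionRing (MvPolynomial (Fin N) k)) =
      algebraMap (MvPolynomial (Fin N) k) (FractionRing (MvPolynomial (Fin N) k)) p →
    d u = (p.totalDegree : ℤ)

section Aux

open IntermediateField

/-- natDegree of minpoly over a fixed field equals the orbit cardinality. -/
theorem aux_minpoly_natDegree {k L : Type*} [Field k] [Field L] [Algebra k L]
    (G : Subgroup (L ≃ₐ[k] L)) [Finite G] (x : L) :
    (minpoly (fixedField G) x).natDegree = Nat.card (MulAction.orbit G x) := by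
  have := Fintype.ofFinite ↥G
  have h : minpoly (fixedField G) x = FixedPoints.minpoly G L x :=
    (FixedPoints.minpoly_eq_minpoly G L x).symm
  rw [h]
  refine (show (FixedPoints.minpoly G L x).natDegree = (prodXSubSMul G L x).natDegree from
    Polynomial.natDegree_toSubring ..).trans ?_
  unfold prodXSubSMul
  rw [Polynomial.natDegree_prod]
  · simp
    have := Fintype.ofFinite (↥G ⧸ MulAction.stabilizer (↥G) x)
    rw [← Nat.card_coe_set_eq]
    rw [Nat.card_congr (MulAction.orbitEquivQuotientStabilizer G x), Nat.card_eq_fintype_card]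
    congr 1
    exact Subsingleton.elim _ _
  · intro g _
    exact Polynomial.X_sub_C_ne_zero _

variable {k : Type*} [Field k] {N : ℕ}

local notation "MvP" => MvPolynomial (Fin N) k
local notation "L" => FractionRing (MvPolynomial (Fin N) k)

theorem aux_rho_algebraMap
    (ρ : Equiv.Perm (Fin N) →* (L ≃ₐ[k] L))
    (hρ : ∀ (π : Equiv.Perm (Fin N)) (j : Fin N),
      ρ π (algebraMap MvP L (MvPolynomial.X j)) = algebraMap MvP L (MvPolynomial.X (π j)))
    (π : Equiv.Perm (Fin N)) (p : MvP) :
    ρ π (algebraMap MvP L p) = algebraMap MvP L (MvPolynomial.rename (⇑π) p) := by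
  have h : ((ρ π).toAlgHom.toRingHom.comp (algebraMap MvP L)) =
      (algebraMap MvP L).comp (MvPolynomial.rename (⇑π)).toRingHom := by
    apply MvPolynomial.ringHom_ext
    · intro c
      simp only [RingHom.comp_apply, AlgHom.toRingHom_eq_coe, RingHom.coe_coe,
        AlgEquiv.toAlgHom_eq_coe, AlgHom.coe_coe]
      rw [MvPolynomial.rename_C]
      have hc : (algebraMap MvP L) (MvPolynomial.C c) = algebraMap k L c := by
        rw [show (MvPolynomial.C c : MvP) = algebraMap k MvP c from rfl,
          ← IsScalarTower.algebraMap_apply]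
      rw [hc]
      exact (ρ π).commutes c
    · intro j
      simp only [RingHom.comp_apply, AlgHom.toRingHom_eq_coe, RingHom.coe_coe,
        AlgEquiv.toAlgHom_eq_coe, AlgHom.coe_coe]
      rw [MvPolynomial.rename_X]
      exact hρ π j
  exact congrFun (congrArg (fun f => f.toFun) h) p

theorem aux_d_val (d : Lˣ → ℤ) (hd : IsDegreeHom k N d)
    (u : Lˣ) (p q : MvP) (hp : p ≠ 0) (hq : q ≠ 0)
    (h : (u : L) = algebraMap MvP L p / algebraMap MvP L q) :
    d u = (p.totalDegree : ℤ) - (q.totalDegree : ℤ) := by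
  have hinj : Function.Injective (algebraMap MvP L) := IsFractionRing.injective MvP L
  have hp' : algebraMap MvP L p ≠ 0 := fun hc => hp (hinj (by simpa using hc))
  have hq' : algebraMap MvP L q ≠ 0 := fun hc => hq (hinj (by simpa using hc))
  set up : Lˣ := Units.mk0 _ hp' with hup
  set uq : Lˣ := Units.mk0 _ hq' with huq
  have hmul : u * uq = up := by
    apply Units.ext
    rw [Units.val_mul]
    show (u : L) * algebraMap MvP L q = algebraMap MvP L p
    rw [h, div_mul_cancel₀ _ hq']
  have h1 : d up = (p.totalDegree : ℤ) := hd.2 up p hp rfl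
  have h2 : d uq = (q.totalDegree : ℤ) := hd.2 uq q hq rfl
  have := hd.1 u uq
  rw [hmul, h1, h2] at this
  omega

theorem aux_d_invariant (ρ : Equiv.Perm (Fin N) →* (L ≃ₐ[k] L))
    (hρ : ∀ (π : Equiv.Perm (Fin N)) (j : Fin N),
      ρ π (algebraMap MvP L (MvPolynomial.X j)) = algebraMap MvP L (MvPolynomial.X (π j)))
    (d : Lˣ → ℤ) (hd : IsDegreeHom k N d)
    (π : Equiv.Perm (Fin N)) (u v : Lˣ) (h : (v : L) = ρ π (u : L)) :
    d v = d u := by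
  obtain ⟨p, q, hq, hu⟩ := IsFractionRing.div_surjective (A := MvP) (u : L)
  have hq0 : q ≠ 0 := nonZeroDivisors.ne_zero hq
  have hp0 : p ≠ 0 := by
    rintro rfl
    apply Units.ne_zero u
    rw [← hu, map_zero, zero_div]
  have hdeg : ∀ w : MvP, (MvPolynomial.rename (⇑π) w).totalDegree = w.totalDegree := by
    intro w
    refine le_antisymm (MvPolynomial.totalDegree_rename_le _ _) ?_
    conv_lhs => rw [show w = MvPolynomial.rename (⇑π.symm) (MvPolynomial.rename (⇑π) w) by
      rw [MvPolynomial.rename_rename]; simp]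
    exact MvPolynomial.totalDegree_rename_le _ _
  have hrinj : Function.Injective (MvPolynomial.rename (⇑π) : MvP → MvP) :=
    MvPolynomial.rename_injective _ π.injective
  have hrp : MvPolynomial.rename (⇑π) p ≠ 0 := fun hc => hp0 (hrinj (by simpa using hc))
  have hrq : MvPolynomial.rename (⇑π) q ≠ 0 := fun hc => hq0 (hrinj (by simpa using hc))
  have hv : (v : L) = algebraMap MvP L (MvPolynomial.rename (⇑π) p) /
      algebraMap MvP L (MvPolynomial.rename (⇑π) q) := by
    rw [h, ← hu, map_div₀, aux_rho_algebraMap ρ hρ, aux_rho_algebraMap ρ hρ]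
  rw [aux_d_val d hd v _ _ hrp hrq hv, aux_d_val d hd u p q hp0 hq0 hu.symm, hdeg, hdeg]

/-- The degree hom as a monoid hom to `Multiplicative ℤ`. -/
noncomputable def aux_D (d : Lˣ → ℤ) (hd : IsDegreeHom k N d) :
    Lˣ →* Multiplicative ℤ where
  toFun u := Multiplicative.ofAdd (d u)
  map_one' := by
    have := hd.1 1 1
    simp only [mul_one] at this
    have : d 1 = 0 := by omega
    simp [this]
  map_mul' a b := by
    simp only [hd.1 a b]
    rfl

end Aux

/-- In the block situation (`L = k(x₁,…,x_N)`,
`G = S_{n₁} × ⋯ × S_{n_r}` acting by permuting the variables in consecutive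
blocks of sizes `n₁,…,n_r`, `K = L^G`, `L_i = K(x_{m_i})` with
`m_i = n₁ + ⋯ + n_{i-1} + 1`), let `deg : Lˣ → ℤ` be any degree homomorphism
on `L`.  Then for every `i` and every `a ∈ L_iˣ`, the integer
`deg (N_{L_i/K}(a))` is divisible by `n_i` (where `N_{L_i/K}(a) ∈ Kˣ` is
viewed as an element of `Lˣ`). -/
theorem degree_of_block_norm_divisible (k : Type*) [Field k]
    (r : ℕ) (hr : 1 ≤ r) (n : Fin r → ℕ) (hn : ∀ i, 1 ≤ n i)
    (N : ℕ) (hN : N = ∑ i, n i)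
    (e : ((i : Fin r) × Fin (n i)) ≃ Fin N)
    (he : ∀ (i : Fin r) (j : Fin (n i)), ((e ⟨i, j⟩ : Fin N) : ℕ) = blockStart n i + (j : ℕ))
    (ρ : Equiv.Perm (Fin N) →*
      (FractionRing (MvPolynomial (Fin N) k) ≃ₐ[k] FractionRing (MvPolynomial (Fin N) k)))
    (hρ : ∀ (π : Equiv.Perm (Fin N)) (j : Fin N),
      ρ π (algebraMap (MvPolynomial (Fin N) k) (FractionRing (MvPolynomial (Fin N) k))
          (MvPolynomial.X j)) =
        algebraMap (MvPolynomial (Fin N) k) (FractionRing (MvPolynomial (Fin N) k))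
          (MvPolynomial.X (π j)))
    (d : (FractionRing (MvPolynomial (Fin N) k))ˣ → ℤ) (hd : IsDegreeHom k N d) :
    let L := FractionRing (MvPolynomial (Fin N) k)
    let G : Subgroup (L ≃ₐ[k] L) := (ρ.comp (blockPermHom n N e)).range
    let K : IntermediateField k L := IntermediateField.fixedField G
    ∀ i : Fin r,
      let Li : IntermediateField K L := IntermediateField.adjoin K
        {algebraMap (MvPolynomial (Fin N) k) L (MvPolynomial.X (e ⟨i, ⟨0, hn i⟩⟩))}
      ∀ (a : (↥Li)ˣ) (b : Lˣ),
        (b : L) = ((Algebra.norm K ((a : ↥Li)) : ↥K) : L) → (n i : ℤ) ∣ d b := by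
  intro L G K i Li a b hb
  classical
  -- Finiteness of G
  haveI hGfin : Finite ↥G := by
    apply Finite.of_surjective
      (f := fun g : ((i : Fin r) → Equiv.Perm (Fin (n i))) =>
        (⟨ρ (blockPermHom n N e g), ⟨g, rfl⟩⟩ : ↥G))
    rintro ⟨σ, g, rfl⟩
    exact ⟨g, rfl⟩
  haveI := Fintype.ofFinite ↥G
  haveI hFD : FiniteDimensional K L := FixedPoints.instFiniteDimensionalSubtypeMemSubfieldSubfield G L
  haveI hGal : IsGalois ↥K L :=
    { to_isSeparable := FixedPoints.isSeparable G L, to_normal := FixedPoints.normal G L }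
  set x0 : L := algebraMap (MvPolynomial (Fin N) k) L (MvPolynomial.X (e ⟨i, ⟨0, hn i⟩⟩)) with hx0
  -- block permutations act blockwise on e
  have hblock : ∀ (g : (i : Fin r) → Equiv.Perm (Fin (n i))) (i' : Fin r) (j : Fin (n i')),
      (blockPermHom n N e g) (e ⟨i', j⟩) = e ⟨i', g i' j⟩ := by
    intro g i' j
    show ((e.symm.trans (Equiv.sigmaCongrRight g)).trans e) (e ⟨i', j⟩) = e ⟨i', g i' j⟩
    simp [Equiv.sigmaCongrRight]
  -- orbit of x0 is the set of block-i variables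
  have horbit : MulAction.orbit G x0 =
      Set.range (fun j : Fin (n i) =>
        algebraMap (MvPolynomial (Fin N) k) L (MvPolynomial.X (e ⟨i, j⟩))) := by
    ext y
    constructor
    · rintro ⟨⟨σ, g, rfl⟩, rfl⟩
      refine ⟨g i ⟨0, hn i⟩, ?_⟩
      show algebraMap (MvPolynomial (Fin N) k) L (MvPolynomial.X (e ⟨i, g i ⟨0, hn i⟩⟩)) =
        ρ (blockPermHom n N e g) x0
      rw [hx0, hρ, hblock]
    · rintro ⟨j, rfl⟩
      refine ⟨⟨ρ (blockPermHom n N e (Pi.mulSingle i (Equiv.swap ⟨0, hn i⟩ j))),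
        ⟨Pi.mulSingle i (Equiv.swap ⟨0, hn i⟩ j), rfl⟩⟩, ?_⟩
      show ρ (blockPermHom n N e (Pi.mulSingle i (Equiv.swap ⟨0, hn i⟩ j))) x0 = _
      rw [hx0, hρ, hblock]
      simp
      rfl
  -- minpoly degree = n i
  have hinj : Function.Injective
      (fun j : Fin (n i) =>
        algebraMap (MvPolynomial (Fin N) k) L (MvPolynomial.X (e ⟨i, j⟩))) := by
    intro j1 j2 hj
    have := IsFractionRing.injective (MvPolynomial (Fin N) k) L hj
    have := MvPolynomial.X_injective (R := k) this
    have : (⟨i, j1⟩ : (i : Fin r) × Fin (n i)) = ⟨i, j2⟩ := e.injective this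
    simpa using this
  have hcard : Nat.card (MulAction.orbit G x0) = n i := by
    rw [horbit, Nat.card_congr (Equiv.ofInjective _ hinj).symm, Nat.card_eq_fintype_card,
      Fintype.card_fin]
  have hmin : (minpoly K x0).natDegree = n i := by
    rw [aux_minpoly_natDegree G x0, hcard]
  have hint : IsIntegral K x0 := IsIntegral.of_finite K x0
  have hfinrankLi : Module.finrank K Li = n i := by
    rw [show Li = IntermediateField.adjoin K {x0} from rfl]
    rw [IntermediateField.adjoin.finrank hint, hmin]
  -- Norm computations
  haveI : FiniteDimensional ↥Li L := FiniteDimensional.right ↥K ↥Li L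
  set m : ℕ := Module.finrank ↥Li L with hm
  have hmpos : 0 < m := Module.finrank_pos
  have key : ((b : L)) ^ m = ∏ σ : L ≃ₐ[↥K] L, σ ((a : ↥Li) : L) := by
    rw [← Algebra.norm_eq_prod_automorphisms]
    have h1 : ((a : ↥Li) : L) = algebraMap ↥Li L (a : ↥Li) := rfl
    have h2 : Algebra.norm ↥K (((a : ↥Li) : L)) = (Algebra.norm ↥K (a : ↥Li)) ^ m := by
      rw [← Algebra.norm_norm (R := ↥K) (S := ↥Li) (a := (((a : ↥Li)) : L)), h1,
        Algebra.norm_algebraMap, map_pow]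
    rw [h2, map_pow, hb]
    rfl
  -- units
  set aL : Lˣ := Units.map (algebraMap ↥Li L).toMonoidHom a with haL
  have hunits : b ^ m = ∏ σ : L ≃ₐ[↥K] L, Units.map (σ : L ≃* L).toMonoidHom aL := by
    apply Units.ext
    rw [Units.val_pow_eq_pow_val, key]
    have hc : ((∏ σ : L ≃ₐ[↥K] L, Units.map (σ : L ≃* L).toMonoidHom aL : Lˣ) : L) =
        ∏ σ : L ≃ₐ[↥K] L, σ ((aL : L)) := by
      rw [← Units.coeHom_apply, map_prod]
      rfl
    rw [hc]
    rfl
  -- apply D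
  have hD := congrArg (aux_D d hd) hunits
  rw [map_pow, map_prod] at hD
  have hDval : ∀ σ : L ≃ₐ[↥K] L, aux_D d hd (Units.map (σ : L ≃* L).toMonoidHom aL)
      = aux_D d hd aL := by
    intro σ
    obtain ⟨g, hg⟩ := FixedPoints.toAlgAut_surjective G L σ
    obtain ⟨τ, π, hτ⟩ := g
    have hval : d (Units.map (σ : L ≃* L).toMonoidHom aL) = d aL := by
      apply aux_d_invariant ρ hρ d hd (blockPermHom n N e π)
      show σ ((aL : L)) = ρ (blockPermHom n N e π) ((aL : L))
      rw [← hg]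
      show τ ((aL : L)) = ρ (blockPermHom n N e π) ((aL : L))
      rw [← hτ]
      rfl
    simp only [aux_D, MonoidHom.coe_mk, OneHom.coe_mk, hval]
  rw [Finset.prod_congr rfl (fun σ _ => hDval σ), Finset.prod_const] at hD
  have hcardAut : Fintype.card (L ≃ₐ[↥K] L) = n i * m := by
    rw [← Nat.card_eq_fintype_card, IsGalois.card_aut_eq_finrank, ← Module.finrank_mul_finrank ↥K ↥Li L, hfinrankLi]
  rw [Finset.card_univ, hcardAut] at hD
  -- translate to ℤ
  have hD' : m * d b = (n i * m) * d aL := by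
    have := congrArg Multiplicative.toAdd hD
    simpa [aux_D, mul_comm] using this
  have : d b = n i * d aL := by
    have hm0 : (m : ℤ) ≠ 0 := Int.natCast_ne_zero.mpr hmpos.ne'
    have : (m : ℤ) * d b = (m : ℤ) * ((n i) * d aL) := by push_cast at hD' ⊢; linarith
    exact mul_left_cancel₀ hm0 this
  exact ⟨d aL, this⟩
end
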